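/- Let p > 1 and let N₀ ∈ ℕ satisfy Σ_{n=N₀+1}^∞ n^{−p} < 1/4. Let (X_n)_{n≥1} be independent random variables with P(X_n = 1) = P(X_n = −1) = 1/2, and let (τ̂_n)_{n≥1} be the p-EMA of (X_n), i.e. τ̂_1 = X_1 and τ̂_{n+1} = (1 − (n+1)^{−p}) τ̂_n + (n+1)^{−p} X_{n+1}. Then the event A = {X_1 = ⋯ = X_{N₀} = 1} has probability 2^{−N₀} > 0, and on A one has τ̂_n > 1/2 for all n ≥ N₀. In particular, τ̂_n does not converge to E[X_1] = 0 almost surely. -/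

import Mathlib

open Filter MeasureTheory Topology ProbabilityTheory

theorem stmt_15 {Ω : Type*} [MeasurableSpace Ω] (P : Measure Ω) [IsProbabilityMeasure P]
    (X : ℕ → Ω → ℝ) (hXmeas : ∀ n, Measurable (X n))
    (hXindep : iIndepFun X P)
    (hXval : ∀ n : ℕ, 1 ≤ n → ∀ ω, X n ω = 1 ∨ X n ω = -1)
    (hX1 : ∀ n : ℕ, 1 ≤ n → P {ω | X n ω = 1} = 1 / 2)
    (hXm1 : ∀ n : ℕ, 1 ≤ n → P {ω | X n ω = -1} = 1 / 2)
    (p : ℝ) (hp : 1 < p)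
    (N₀ : ℕ) (hN₀1 : 1 ≤ N₀)
    (hN₀ : ∑' n : ℕ, ((N₀ : ℝ) + 1 + n) ^ (-p) < 1 / 4)
    (τhat : Ω → ℕ → ℝ)
    (hinit : ∀ ω, τhat ω 1 = X 1 ω)
    (hrec : ∀ ω, ∀ n : ℕ, 1 ≤ n →
      τhat ω (n + 1) =
        (1 - ((n : ℝ) + 1) ^ (-p)) * τhat ω n + ((n : ℝ) + 1) ^ (-p) * X (n + 1) ω) :
    P {ω | ∀ k ∈ Finset.Icc 1 N₀, X k ω = 1} = (1 / 2 : ENNReal) ^ N₀ ∧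
      (0 : ENNReal) < (1 / 2 : ENNReal) ^ N₀ ∧
      (∀ ω ∈ {ω | ∀ k ∈ Finset.Icc 1 N₀, X k ω = 1}, ∀ n : ℕ, N₀ ≤ n → 1 / 2 < τhat ω n) ∧
      ¬ (∀ᵐ ω ∂P, Tendsto (fun n => τhat ω n) atTop (𝓝 0)) := by
  -- weights are in (0,1]
  have ha_pos : ∀ n : ℕ, 1 ≤ n → (0:ℝ) < ((n:ℝ)+1) ^ (-p) := by
    intro n hn
    exact Real.rpow_pos_of_pos (by positivity) _
  have ha_le1 : ∀ n : ℕ, 1 ≤ n → ((n:ℝ)+1) ^ (-p) ≤ 1 := by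
    intro n hn
    exact Real.rpow_le_one_of_one_le_of_nonpos (by exact_mod_cast Nat.le_add_left 1 n) (by linarith)
  -- |τhat ω n| ≤ 1 for all n ≥ 1
  have habs : ∀ ω, ∀ n : ℕ, 1 ≤ n → |τhat ω n| ≤ 1 := by
    intro ω n hn
    induction n with
    | zero => omega
    | succ m ih =>
      rcases Nat.eq_or_lt_of_le hn with h1 | h1
      · rw [← h1]
        rw [hinit ω]
        rcases hXval 1 le_rfl ω with h | h <;> rw [h] <;> norm_num
      · have hm : 1 ≤ m := by omega
        have hτ := ih hm
        have hX' : |X (m+1) ω| ≤ 1 := by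
          rcases hXval (m+1) (by omega) ω with h | h <;> rw [h] <;> norm_num
        rw [hrec ω m hm]
        have h0 := ha_pos m hm
        have h1' := ha_le1 m hm
        obtain ⟨hτ1, hτ2⟩ := abs_le.1 hτ
        obtain ⟨hX1', hX2'⟩ := abs_le.1 hX'
        rw [abs_le]
        constructor
        · nlinarith
        · nlinarith
  -- summability
  have hsum : Summable (fun n : ℕ => ((N₀:ℝ) + 1 + n) ^ (-p)) := by
    have h1 : Summable (fun n : ℕ => (n:ℝ) ^ (-p)) :=
      (Real.summable_nat_rpow).2 (by linarith)
    have h2 : Summable (fun n : ℕ => ((n + (N₀+1) : ℕ):ℝ) ^ (-p)) :=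
      ((summable_nat_add_iff (f := fun n : ℕ => (n:ℝ) ^ (-p)) (N₀+1)).2 h1 : _)
    refine h2.congr fun n => ?_
    push_cast
    ring_nf
  -- the key pointwise bound on the event
  have hkey : ∀ ω ∈ {ω | ∀ k ∈ Finset.Icc 1 N₀, X k ω = 1}, ∀ n : ℕ, N₀ ≤ n →
      1 / 2 < τhat ω n := by
    intro ω hω n hn
    -- τhat ω N₀ = 1
    have hN : ∀ m : ℕ, 1 ≤ m → m ≤ N₀ → τhat ω m = 1 := by
      intro m hm
      induction m with
      | zero => omega
      | succ k ih =>
        intro hk1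
        rcases Nat.eq_or_lt_of_le hm with h1 | h1
        · rw [← h1, hinit ω]
          exact hω 1 (Finset.mem_Icc.2 ⟨le_rfl, hN₀1⟩)
        · have hk : 1 ≤ k := by omega
          rw [hrec ω k hk, ih hk (by omega), hω (k+1) (Finset.mem_Icc.2 ⟨by omega, hk1⟩)]
          ring
    -- lower bound by induction for n ≥ N₀
    have hlow : ∀ n : ℕ, N₀ ≤ n →
        1 - 2 * ∑ m ∈ Finset.range (n - N₀), ((N₀:ℝ) + 1 + m) ^ (-p) ≤ τhat ω n := by
      intro n hn
      induction n with
      | zero => omega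
      | succ k ih =>
        rcases Nat.eq_or_lt_of_le hn with h1 | h1
        · rw [← h1]
          simp [hN N₀ hN₀1 le_rfl]
        · have hk : N₀ ≤ k := by omega
          have hk1 : 1 ≤ k := by omega
          have hI := ih hk
          have hstep : τhat ω k - 2 * ((k:ℝ)+1)^(-p) ≤ τhat ω (k+1) := by
            rw [hrec ω k hk1]
            have hX' : -1 ≤ X (k+1) ω := by
              rcases hXval (k+1) (by omega) ω with h | h <;> rw [h] <;> norm_num
            have hτ : τhat ω k ≤ 1 := (abs_le.1 (habs ω k hk1)).2
            have h0 := ha_pos k hk1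
            nlinarith [ha_le1 k hk1]
          have hrange : k + 1 - N₀ = (k - N₀) + 1 := by omega
          rw [hrange, Finset.sum_range_succ]
          have hcast : ((N₀:ℝ) + 1 + (k - N₀ : ℕ)) ^ (-p) = ((k:ℝ)+1)^(-p) := by
            congr 1
            have : (k - N₀ : ℕ) = k - N₀ := rfl
            have : ((k - N₀ : ℕ) : ℝ) = (k:ℝ) - N₀ := by
              push_cast [Nat.cast_sub hk]
              ring
            rw [this]; ring
          rw [hcast]
          linarith
    have hps : ∑ m ∈ Finset.range (n - N₀), ((N₀:ℝ) + 1 + m) ^ (-p)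
        ≤ ∑' m : ℕ, ((N₀:ℝ) + 1 + m) ^ (-p) :=
      Summable.sum_le_tsum _ (fun m _ => (Real.rpow_pos_of_pos (by positivity) _).le) hsum
    have := hlow n hn
    linarith
  -- measure of the event
  have hset : {ω | ∀ k ∈ Finset.Icc 1 N₀, X k ω = 1}
      = ⋂ k ∈ Finset.Icc 1 N₀, X k ⁻¹' {1} := by
    ext ω; simp [Set.mem_iInter]
  have hmeas : P {ω | ∀ k ∈ Finset.Icc 1 N₀, X k ω = 1} = (1 / 2 : ENNReal) ^ N₀ := by
    rw [hset, hXindep.meas_biInter (S := Finset.Icc 1 N₀)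
      (s := fun k => X k ⁻¹' {1}) (fun i _ => ⟨{1}, measurableSet_singleton 1, rfl⟩)]
    have : ∀ i ∈ Finset.Icc 1 N₀, P (X i ⁻¹' {1}) = (1/2 : ENNReal) := by
      intro i hi
      have : X i ⁻¹' {1} = {ω | X i ω = 1} := rfl
      rw [this, hX1 i (Finset.mem_Icc.1 hi).1]
    rw [Finset.prod_congr rfl this, Finset.prod_const, Nat.card_Icc]
    norm_num
  have hpos : (0 : ENNReal) < (1 / 2 : ENNReal) ^ N₀ := by
    simp [ENNReal.pow_pos]
  refine ⟨hmeas, hpos, hkey, ?_⟩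
  intro hae
  have hnull : P {ω | ¬ Tendsto (fun n => τhat ω n) atTop (𝓝 0)} = 0 := ae_iff.1 hae
  have hsub : ¬ ({ω | ∀ k ∈ Finset.Icc 1 N₀, X k ω = 1}
      ⊆ {ω | ¬ Tendsto (fun n => τhat ω n) atTop (𝓝 0)}) := by
    intro hs
    have := measure_mono (μ := P) hs
    rw [hnull, hmeas] at this
    exact absurd (le_antisymm this zero_le) (ne_of_gt hpos)
  obtain ⟨ω, hωA, hωT⟩ := Set.not_subset.1 hsub
  rw [Set.mem_setOf_eq, not_not] at hωT
  have hev : ∀ᶠ n in atTop, (1/2 : ℝ) ≤ τhat ω n :=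
    eventually_atTop.2 ⟨N₀, fun n hn => (hkey ω hωA n hn).le⟩
  have := ge_of_tendsto hωT hev
  linarith
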